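/- For any pair of positive integers s and t, there exists a constant C (depending only on s and t) such that for every positive integer r, with n = C·r, every coloring of the edges of the complete bipartite graph K_{n,n} with r colors contains a monochromatic copy of K_{s,t} or a rainbow copy of K_{s,t}. -/

import Mathlib

/-- The coloring `c` of the edges of `K_{n₁,n₂}` contains a monochromatic copy of `K_{s,t}`
with the `s`-side in the first part and the `t`-side in the second part. -/
def HasMonoKst {n₁ n₂ r : ℕ} (c : Fin n₁ × Fin n₂ → Fin r) (s t : ℕ) : Prop :=
  ∃ (A : Finset (Fin n₁)) (B : Finset (Fin n₂)), A.card = s ∧ B.card = t ∧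
    ∀ a ∈ A, ∀ b ∈ B, ∀ a' ∈ A, ∀ b' ∈ B, c (a, b) = c (a', b')

/-- The coloring `c` of the edges of `K_{n₁,n₂}` contains a rainbow copy of `K_{s,t}`
with the `s`-side in the first part and the `t`-side in the second part. -/
def HasRainbowKst {n₁ n₂ r : ℕ} (c : Fin n₁ × Fin n₂ → Fin r) (s t : ℕ) : Prop :=
  ∃ (A : Finset (Fin n₁)) (B : Finset (Fin n₂)), A.card = s ∧ B.card = t ∧
    ∀ a ∈ A, ∀ b ∈ B, ∀ a' ∈ A, ∀ b' ∈ B, (a, b) ≠ (a', b') → c (a, b) ≠ c (a', b')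

namespace BGRaux
open Finset

lemma sub_pow_le_descFactorial (n k : ℕ) : (n - k) ^ k ≤ n.descFactorial k := by
  induction k with
  | zero => simp
  | succ k ih =>
    rw [Nat.descFactorial_succ]
    calc (n - (k+1))^(k+1) = (n-(k+1))^k * (n-(k+1)) := pow_succ _ _
    _ ≤ n.descFactorial k * (n - k) :=
        Nat.mul_le_mul (le_trans (Nat.pow_le_pow_left (by omega) k) ih) (by omega)
    _ = (n - k) * n.descFactorial k := mul_comm _ _

lemma zar {n r q : ℕ} (c : Fin n × Fin n → Fin r) (hq : 0 < q)
    (hmono : ¬ HasMonoKst c q q) (k₀ : Fin r) (S : Finset (Fin n)) (W : Fin n → Finset (Fin n))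
    (hcol : ∀ u ∈ S, ∀ v ∈ W u, c (u, v) = k₀) (w : ℕ) (hw : ∀ u ∈ S, w ≤ (W u).card) :
    S.card * w.choose q ≤ (q - 1) * n.choose q := by
  classical
  set P : Finset ((_ : Fin n) × Finset (Fin n)) := S.sigma (fun u => (W u).powersetCard q) with hP
  have hcardP : S.card * w.choose q ≤ P.card := by
    rw [hP, Finset.card_sigma]
    calc S.card * w.choose q = ∑ _u ∈ S, w.choose q := by rw [Finset.sum_const, smul_eq_mul]
    _ ≤ ∑ u ∈ S, ((W u).powersetCard q).card := Finset.sum_le_sum (fun u hu => by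
        rw [Finset.card_powersetCard]; exact Nat.choose_le_choose q (hw u hu))
  have fiber : ∀ T ∈ P.image (fun z => z.2), (P.filter (fun z => z.2 = T)).card ≤ q - 1 := by
    intro T hT
    by_contra hgt
    push_neg at hgt
    have hTq : T.card = q := by
      obtain ⟨z, hz, rfl⟩ := Finset.mem_image.mp hT
      rw [hP] at hz
      exact (Finset.mem_powersetCard.mp (Finset.mem_sigma.mp hz).2).2
    have hq' : q ≤ ((P.filter (fun z => z.2 = T)).image (fun z => z.1)).card := by
      rw [Finset.card_image_of_injOn]
      · omega
      · intro z hz z' hz' hzz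
        have h1 := (Finset.mem_filter.mp hz).2
        have h2 := (Finset.mem_filter.mp hz').2
        exact Sigma.ext hzz (by rw [h1, h2])
    obtain ⟨A, hA, hAcard⟩ := Finset.exists_subset_card_eq hq'
    have hsub : ∀ a ∈ A, T ⊆ W a := by
      intro a ha
      obtain ⟨z, hz, rfl⟩ := Finset.mem_image.mp (hA ha)
      have h1 := Finset.mem_filter.mp hz
      have h2 := Finset.mem_sigma.mp (by rw [hP] at h1; exact h1.1)
      have := (Finset.mem_powersetCard.mp h2.2).1
      rwa [h1.2] at this
    have hmemS : ∀ a ∈ A, a ∈ S := by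
      intro a ha
      obtain ⟨z, hz, rfl⟩ := Finset.mem_image.mp (hA ha)
      have h1 := Finset.mem_filter.mp hz
      exact (Finset.mem_sigma.mp (by rw [hP] at h1; exact h1.1)).1
    exact hmono ⟨A, T, hAcard, hTq, fun a ha b hb a' ha' b' hb' => by
      rw [hcol a (hmemS a ha) b (hsub a ha hb), hcol a' (hmemS a' ha') b' (hsub a' ha' hb')]⟩
  have himg : (P.image (fun z => z.2)).card ≤ n.choose q := by
    calc (P.image (fun z => z.2)).card ≤ ((univ : Finset (Fin n)).powersetCard q).card := by
          apply Finset.card_le_card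
          intro T hT
          obtain ⟨z, hz, rfl⟩ := Finset.mem_image.mp hT
          rw [hP] at hz
          have h2 := (Finset.mem_sigma.mp hz).2
          exact Finset.mem_powersetCard.mpr ⟨Finset.subset_univ _,
            (Finset.mem_powersetCard.mp h2).2⟩
    _ = n.choose q := by rw [Finset.card_powersetCard, Finset.card_univ, Fintype.card_fin]
  calc S.card * w.choose q ≤ P.card := hcardP
  _ ≤ (q-1) * (P.image (fun z => z.2)).card := Finset.card_le_mul_card_image P (q-1) fiber
  _ ≤ (q-1) * n.choose q := Nat.mul_le_mul_left _ himg

lemma zar_pow {n r q : ℕ} (c : Fin n × Fin n → Fin r) (hq : 0 < q)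
    (hmono : ¬ HasMonoKst c q q) (k₀ : Fin r) (S : Finset (Fin n)) (W : Fin n → Finset (Fin n))
    (hcol : ∀ u ∈ S, ∀ v ∈ W u, c (u, v) = k₀) (w : ℕ) (hw : ∀ u ∈ S, w ≤ (W u).card) :
    S.card * (w - q)^q ≤ q * n ^ q := by
  have h := zar c hq hmono k₀ S W hcol w hw
  calc S.card * (w-q)^q ≤ S.card * w.descFactorial q :=
        Nat.mul_le_mul_left _ (sub_pow_le_descFactorial w q)
  _ = S.card * (q.factorial * w.choose q) := by rw [Nat.descFactorial_eq_factorial_mul_choose]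
  _ = q.factorial * (S.card * w.choose q) := by ring
  _ ≤ q.factorial * ((q-1) * n.choose q) := Nat.mul_le_mul_left _ h
  _ = (q-1) * (q.factorial * n.choose q) := by ring
  _ = (q-1) * n.descFactorial q := by rw [Nat.descFactorial_eq_factorial_mul_choose]
  _ ≤ q * n ^ q := Nat.mul_le_mul (by omega) (Nat.descFactorial_le_pow n q)

lemma endgame {n r q D E : ℕ} (c : Fin n × Fin n → Fin r) (hq : 2 ≤ q)
    (hD : D = 4^q * q^4) (hE : E = q * (8*D)^q + 2*q + 2) (hn : 2*D*E ≤ n)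
    (hmono : ¬ HasMonoKst c q q) (k₀ : Fin r)
    (S : Finset (Fin n)) (W : Fin n → Finset (Fin n))
    (hcol : ∀ u ∈ S, ∀ v ∈ W u, c (u, v) = k₀)
    (hw : ∀ u ∈ S, n ≤ 2*D*(W u).card) (hS : E ≤ S.card) : False := by
  have hD1 : 1 ≤ D := by
    rw [hD]; exact Nat.one_le_iff_ne_zero.mpr (by positivity)
  have hE2q : 2*q + 2 ≤ E := by
    have h0 : 0 ≤ q * (8*D)^q := Nat.zero_le _
    linarith [hE.ge, hE.le]
  set w := n / (2*D) with hwdef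
  have hwc : ∀ u ∈ S, w ≤ (W u).card := by
    intro u hu
    have := Nat.div_le_div_right (c := 2*D) (hw u hu)
    rwa [Nat.mul_div_cancel_left _ (by omega)] at this
  have key := zar_pow c (by omega) hmono k₀ S W hcol w hwc
  set a := n / (4*D) with hadef
  have haq : q ≤ a := by
    rw [hadef, Nat.le_div_iff_mul_le (by omega)]
    calc q * (4*D) ≤ 2*D*(2*q) := by ring_nf; omega
    _ ≤ 2*D*E := Nat.mul_le_mul_left _ (by omega)
    _ ≤ n := hn
  have ha1 : 1 ≤ a := by omega
  have haw : a ≤ w - q := by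
    have h1 : a = w / 2 := by rw [hadef, hwdef, Nat.div_div_eq_div_mul]; ring_nf
    have h2 : w / 2 * 2 ≤ w := Nat.div_mul_le_self w 2
    omega
  have hpow : S.card * a^q ≤ q * n^q :=
    le_trans (Nat.mul_le_mul_left _ (Nat.pow_le_pow_left haw q)) key
  have hn8 : n ≤ 8*D*a := by
    have h1 : 4*D*a + n % (4*D) = n := by rw [hadef]; exact Nat.div_add_mod n (4*D)
    have h2 : n % (4*D) < 4*D := Nat.mod_lt _ (by omega)
    have h4 : n < 4*D*a + 4*D := by linarith
    have h5 : 4*D ≤ 4*D*a := Nat.le_mul_of_pos_right _ ha1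
    calc n ≤ 4*D*a + 4*D := le_of_lt h4
    _ ≤ 4*D*a + 4*D*a := Nat.add_le_add_left h5 _
    _ = 8*D*a := by ring
  have hfinal : E * a^q ≤ (q * (8*D)^q) * a^q := by
    calc E * a^q ≤ S.card * a^q := Nat.mul_le_mul_right _ hS
    _ ≤ q * n^q := hpow
    _ ≤ q * (8*D*a)^q := Nat.mul_le_mul_left _ (Nat.pow_le_pow_left hn8 q)
    _ = (q * (8*D)^q) * a^q := by rw [mul_pow]; ring
  have : E ≤ q * (8*D)^q := Nat.le_of_mul_le_mul_right hfinal (Nat.pow_pos (by omega))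
  linarith [hE.le]

lemma row_case {n r q D E : ℕ} (c : Fin n × Fin n → Fin r) (hq : 2 ≤ q) (hr : 0 < r)
    (hD : D = 4^q*q^4) (hE : E = q*(8*D)^q + 2*q + 2) (hn : n = 2*D*E*r)
    (hmono : ¬ HasMonoKst c q q)
    (hT : n^3 ≤ D * ((univ : Finset (Fin n × Fin n × Fin n)).filter (fun z =>
        z.2.1 ≠ z.2.2 ∧ c (z.1, z.2.1) = c (z.1, z.2.2))).card) : False := by
  classical
  have hD1 : 1 ≤ D := by rw [hD]; exact Nat.one_le_iff_ne_zero.mpr (by positivity)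
  have hE1 : 1 ≤ E := by rw [hE]; omega
  have hn0 : 0 < n := by
    rw [hn]; exact Nat.mul_pos (Nat.mul_pos (by omega) (by omega)) hr
  set T := (univ : Finset (Fin n × Fin n × Fin n)).filter (fun z =>
        z.2.1 ≠ z.2.2 ∧ c (z.1, z.2.1) = c (z.1, z.2.2)) with hTdef
  set d : Fin n → Fin r → ℕ := fun u k => (univ.filter fun v => c (u,v) = k).card with hddef
  set m : Fin n → ℕ := fun u => (univ : Finset (Fin r)).sup (d u) with hmdef
  have hmn : ∀ u, m u ≤ n := by
    intro u
    apply Finset.sup_le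
    intro k _
    calc d u k ≤ (univ : Finset (Fin n)).card := Finset.card_filter_le _ _
    _ = n := by rw [Finset.card_univ, Fintype.card_fin]
  -- bound card T by the row maxima
  have hTsum : T.card ≤ ∑ u : Fin n, m u * n := by
    rw [Finset.card_eq_sum_card_fiberwise (f := fun z => z.1) (t := univ) (fun z _ => mem_univ _)]
    apply Finset.sum_le_sum
    intro x _
    have hfib : ∀ y ∈ (T.filter (fun z => z.1 = x)).image (fun z => z.2.1),
        ((T.filter (fun z => z.1 = x)).filter (fun z => z.2.1 = y)).card ≤ m x := by
      intro y _
      have hle : ((T.filter (fun z => z.1 = x)).filter (fun z => z.2.1 = y)).card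
          ≤ (univ.filter fun v => c (x,v) = c (x,y)).card := by
        apply Finset.card_le_card_of_injOn (fun z => z.2.2)
        · intro z hz
          simp only [Finset.mem_coe, Finset.mem_filter, Finset.mem_univ, true_and] at hz ⊢
          obtain ⟨⟨hzT, hz1⟩, hz2⟩ := hz
          rw [hTdef, Finset.mem_filter] at hzT
          rw [← hz1, ← hz2]
          exact hzT.2.2.symm
        · intro z hz z' hz' hzz
          simp only [Finset.mem_coe, Finset.mem_filter] at hz hz'
          have : z.1 = z'.1 := by rw [hz.1.2, hz'.1.2]
          have h21 : z.2.1 = z'.2.1 := by rw [hz.2, hz'.2]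
          exact Prod.ext this (Prod.ext h21 hzz)
      calc ((T.filter (fun z => z.1 = x)).filter (fun z => z.2.1 = y)).card
          ≤ (univ.filter fun v => c (x,v) = c (x,y)).card := hle
      _ = d x (c (x,y)) := by rw [hddef]
      _ ≤ m x := by rw [hmdef]; exact Finset.le_sup (Finset.mem_univ _)
    calc (T.filter (fun z => z.1 = x)).card
        ≤ m x * ((T.filter (fun z => z.1 = x)).image (fun z => z.2.1)).card :=
          Finset.card_le_mul_card_image _ (m x) hfib
    _ ≤ m x * n := by
        apply Nat.mul_le_mul_left
        calc ((T.filter (fun z => z.1 = x)).image (fun z => z.2.1)).card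
            ≤ (univ : Finset (Fin n)).card := Finset.card_le_univ _
        _ = n := by rw [Finset.card_univ, Fintype.card_fin]
  have h2 : n^2 ≤ D * ∑ u : Fin n, m u := by
    have hc : n^2 * n ≤ (D * ∑ u : Fin n, m u) * n := by
      calc n^2 * n = n^3 := by ring
      _ ≤ D * T.card := hT
      _ ≤ D * ∑ u : Fin n, m u * n := Nat.mul_le_mul_left _ hTsum
      _ = (D * ∑ u : Fin n, m u) * n := by rw [← Finset.sum_mul]; ring
    exact Nat.le_of_mul_le_mul_right hc hn0
  set B := (univ : Finset (Fin n)).filter (fun u => n ≤ 2*D*m u) with hBdef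
  have hB : n ≤ 2*D*B.card := by
    have hsplit : ∑ u : Fin n, 2*D*m u
        = ∑ u ∈ B, 2*D*m u + ∑ u ∈ univ.filter (fun u => ¬ (n ≤ 2*D*m u)), 2*D*m u := by
      rw [hBdef]
      exact (Finset.sum_filter_add_sum_filter_not univ _ _).symm
    have hb1 : ∑ u ∈ B, 2*D*m u ≤ B.card * (2*D*n) := by
      rw [← smul_eq_mul]
      apply Finset.sum_le_card_nsmul
      intro u _
      exact Nat.mul_le_mul_left _ (hmn u)
    have hb2 : ∑ u ∈ univ.filter (fun u => ¬ (n ≤ 2*D*m u)), 2*D*m u ≤ n * n := by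
      calc ∑ u ∈ univ.filter (fun u => ¬ (n ≤ 2*D*m u)), 2*D*m u
          ≤ (univ.filter (fun u => ¬ (n ≤ 2*D*m u))).card • n := by
            apply Finset.sum_le_card_nsmul
            intro u hu
            have := (Finset.mem_filter.mp hu).2
            omega
      _ ≤ n * n := by
          rw [smul_eq_mul]
          apply Nat.mul_le_mul_right
          calc (univ.filter (fun u => ¬ (n ≤ 2*D*m u))).card
              ≤ (univ : Finset (Fin n)).card := Finset.card_filter_le _ _
          _ = n := by rw [Finset.card_univ, Fintype.card_fin]
    have hbig : 2*(n^2) ≤ ∑ u : Fin n, 2*D*m u := by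
      calc 2*(n^2) ≤ 2*(D * ∑ u : Fin n, m u) := Nat.mul_le_mul_left _ h2
      _ = ∑ u : Fin n, 2*D*m u := by rw [Finset.mul_sum, Finset.mul_sum]; apply Finset.sum_congr rfl; intros; ring
    have hnn : n*n ≤ B.card * (2*D*n) := by nlinarith [hsplit, hb1, hb2, hbig]
    have hc : n * n ≤ (2*D*B.card) * n := by calc n*n ≤ B.card * (2*D*n) := hnn
      _ = (2*D*B.card)*n := by ring
    exact Nat.le_of_mul_le_mul_right hc hn0
  have hNer : Nonempty (Fin r) := ⟨⟨0, hr⟩⟩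
  have hks : ∀ u, ∃ k₁ ∈ (univ : Finset (Fin r)), m u = d u k₁ := fun u =>
    Finset.exists_mem_eq_sup univ Finset.univ_nonempty (d u)
  choose kk hkmem hkeq using hks
  have hpig : ∃ k₀ : Fin r, B.card ≤ r * (B.filter (fun u => kk u = k₀)).card := by
    by_contra hcon
    push_neg at hcon
    have hcardB : B.card = ∑ k₀ : Fin r, (B.filter (fun u => kk u = k₀)).card :=
      Finset.card_eq_sum_card_fiberwise (fun u _ => Finset.mem_univ _)
    have h1 : ∑ k₀ : Fin r, r * (B.filter (fun u => kk u = k₀)).card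
        < ∑ _k₀ : Fin r, B.card :=
      Finset.sum_lt_sum_of_nonempty Finset.univ_nonempty (fun k₀ _ => hcon k₀)
    rw [← Finset.mul_sum, ← hcardB, Finset.sum_const, Finset.card_univ, Fintype.card_fin,
      smul_eq_mul] at h1
    exact lt_irrefl _ h1
  obtain ⟨k₀, hk₀⟩ := hpig
  set S := B.filter (fun u => kk u = k₀) with hSdef
  set W : Fin n → Finset (Fin n) := fun u => univ.filter (fun v => c (u,v) = k₀) with hWdef
  have hcol : ∀ u ∈ S, ∀ v ∈ W u, c (u, v) = k₀ := by
    intro u _ v hv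
    rw [hWdef] at hv
    exact (Finset.mem_filter.mp hv).2
  have hw : ∀ u ∈ S, n ≤ 2*D*(W u).card := by
    intro u hu
    rw [hSdef, Finset.mem_filter] at hu
    have hB' := (Finset.mem_filter.mp hu.1).2
    have hWd : (W u).card = d u k₀ := by simp only [hWdef, hddef]
    have : (W u).card = m u := by rw [hWd, hkeq u, hu.2]
    rw [this]
    exact hB'
  have hS : E ≤ S.card := by
    have h3 : (2*D)*(E*r) ≤ (2*D)*(S.card*r) := by
      calc (2*D)*(E*r) = 2*D*E*r := by ring
      _ = n := hn.symm
      _ ≤ 2*D*B.card := hB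
      _ ≤ 2*D*(r*S.card) := Nat.mul_le_mul_left _ hk₀
      _ = (2*D)*(S.card*r) := by ring
    have h4 : E*r ≤ S.card*r := Nat.le_of_mul_le_mul_left h3 (by omega)
    exact Nat.le_of_mul_le_mul_right h4 hr
  exact endgame c hq hD hE (by rw [hn]; exact Nat.le_mul_of_pos_right _ hr) hmono k₀ S W hcol hw hS

lemma gen_case {n r q D E : ℕ} (c : Fin n × Fin n → Fin r) (hq : 2 ≤ q) (hr : 0 < r)
    (hD : D = 4^q*q^4) (hE : E = q*(8*D)^q + 2*q + 2) (hn : n = 2*D*E*r)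
    (hmono : ¬ HasMonoKst c q q)
    (hT : n^4 ≤ D * ((univ : Finset ((Fin n × Fin n) × (Fin n × Fin n))).filter (fun z =>
        z.1.1 ≠ z.2.1 ∧ z.1.2 ≠ z.2.2 ∧ c z.1 = c z.2)).card) : False := by
  classical
  have hD1 : 1 ≤ D := by rw [hD]; exact Nat.one_le_iff_ne_zero.mpr (by positivity)
  have hE1 : 1 ≤ E := by rw [hE]; omega
  have hn0 : 0 < n := by
    rw [hn]; exact Nat.mul_pos (Nat.mul_pos (by omega) (by omega)) hr
  have hNer : Nonempty (Fin r) := ⟨⟨0, hr⟩⟩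
  set T := (univ : Finset ((Fin n × Fin n) × (Fin n × Fin n))).filter (fun z =>
        z.1.1 ≠ z.2.1 ∧ z.1.2 ≠ z.2.2 ∧ c z.1 = c z.2) with hTdef
  set cls : Fin r → Finset (Fin n × Fin n) := fun k => univ.filter (fun e => c e = k) with hclsdef
  obtain ⟨k₀, _, hk₀max⟩ := Finset.exists_max_image (univ : Finset (Fin r))
    (fun k => (cls k).card) Finset.univ_nonempty
  have hnn : (univ : Finset (Fin n × Fin n)).card = n * n := by
    rw [Finset.card_univ]; simp [Fintype.card_prod, Fintype.card_fin]
  have hTmax : T.card ≤ (cls k₀).card * (n*n) := by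
    have hfib : ∀ e ∈ T.image (fun z => z.1),
        (T.filter (fun z => z.1 = e)).card ≤ (cls k₀).card := by
      intro e _
      calc (T.filter (fun z => z.1 = e)).card ≤ (cls (c e)).card := by
            apply Finset.card_le_card_of_injOn (fun z => z.2)
            · intro z hz
              simp only [Finset.mem_coe, Finset.mem_filter] at hz
              have hzT := hz.1
              rw [hTdef, Finset.mem_filter] at hzT
              rw [hclsdef]
              simp only [Finset.mem_coe, Finset.mem_filter, Finset.mem_univ, true_and]
              rw [← hz.2]
              exact hzT.2.2.2.symm
            · intro z hz z' hz' hzz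
              simp only [Finset.mem_coe, Finset.mem_filter] at hz hz'
              exact Prod.ext (by rw [hz.2, hz'.2]) hzz
      _ ≤ (cls k₀).card := hk₀max _ (Finset.mem_univ _)
    calc T.card ≤ (cls k₀).card * (T.image (fun z => z.1)).card :=
          Finset.card_le_mul_card_image _ _ hfib
    _ ≤ (cls k₀).card * (n*n) := by
        apply Nat.mul_le_mul_left
        rw [← hnn]
        exact Finset.card_le_univ _
  have h2 : n^2 ≤ D * (cls k₀).card := by
    have hc : n^2 * (n*n) ≤ (D * (cls k₀).card) * (n*n) := by
      calc n^2 * (n*n) = n^4 := by ring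
      _ ≤ D * T.card := hT
      _ ≤ D * ((cls k₀).card * (n*n)) := Nat.mul_le_mul_left _ hTmax
      _ = (D * (cls k₀).card) * (n*n) := by ring
    exact Nat.le_of_mul_le_mul_right hc (by positivity)
  set W : Fin n → Finset (Fin n) := fun u => univ.filter (fun v => c (u,v) = k₀) with hWdef
  have hclssum : (cls k₀).card ≤ ∑ u : Fin n, (W u).card := by
    rw [Finset.card_eq_sum_card_fiberwise (f := fun e => e.1) (t := univ) (fun e _ => mem_univ _)]
    apply Finset.sum_le_sum
    intro u _
    apply Finset.card_le_card_of_injOn (fun e => e.2)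
    · intro e he
      simp only [Finset.mem_coe, Finset.mem_filter] at he
      have he1 := he.1
      rw [hclsdef] at he1
      simp only [Finset.mem_filter, Finset.mem_univ, true_and] at he1
      rw [hWdef]
      simp only [Finset.mem_coe, Finset.mem_filter, Finset.mem_univ, true_and]
      rw [← he.2, Prod.mk.eta]
      exact he1
    · intro e he e' he' hee
      simp only [Finset.mem_coe, Finset.mem_filter] at he he'
      exact Prod.ext (by rw [he.2, he'.2]) hee
  set S := (univ : Finset (Fin n)).filter (fun u => n ≤ 2*D*(W u).card) with hSdef
  have hWn : ∀ u, (W u).card ≤ n := by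
    intro u
    calc (W u).card ≤ (univ : Finset (Fin n)).card := Finset.card_filter_le _ _
    _ = n := by rw [Finset.card_univ, Fintype.card_fin]
  have hB : n ≤ 2*D*S.card := by
    have hsplit : ∑ u : Fin n, 2*D*(W u).card
        = ∑ u ∈ S, 2*D*(W u).card
          + ∑ u ∈ univ.filter (fun u => ¬ (n ≤ 2*D*(W u).card)), 2*D*(W u).card := by
      rw [hSdef]
      exact (Finset.sum_filter_add_sum_filter_not univ _ _).symm
    have hb1 : ∑ u ∈ S, 2*D*(W u).card ≤ S.card * (2*D*n) := by
      rw [← smul_eq_mul]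
      apply Finset.sum_le_card_nsmul
      intro u _
      exact Nat.mul_le_mul_left _ (hWn u)
    have hb2 : ∑ u ∈ univ.filter (fun u => ¬ (n ≤ 2*D*(W u).card)), 2*D*(W u).card ≤ n * n := by
      calc ∑ u ∈ univ.filter (fun u => ¬ (n ≤ 2*D*(W u).card)), 2*D*(W u).card
          ≤ (univ.filter (fun u => ¬ (n ≤ 2*D*(W u).card))).card • n := by
            apply Finset.sum_le_card_nsmul
            intro u hu
            have := (Finset.mem_filter.mp hu).2
            omega
      _ ≤ n * n := by
          rw [smul_eq_mul]
          apply Nat.mul_le_mul_right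
          calc (univ.filter (fun u => ¬ (n ≤ 2*D*(W u).card))).card
              ≤ (univ : Finset (Fin n)).card := Finset.card_filter_le _ _
          _ = n := by rw [Finset.card_univ, Fintype.card_fin]
    have hbig : 2*(n^2) ≤ ∑ u : Fin n, 2*D*(W u).card := by
      calc 2*(n^2) ≤ 2*(D * (cls k₀).card) := Nat.mul_le_mul_left _ h2
      _ ≤ 2*(D * ∑ u : Fin n, (W u).card) :=
          Nat.mul_le_mul_left _ (Nat.mul_le_mul_left _ hclssum)
      _ = ∑ u : Fin n, 2*D*(W u).card := by
          rw [Finset.mul_sum, Finset.mul_sum]; apply Finset.sum_congr rfl; intros; ring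
    have hnn2 : n*n ≤ S.card * (2*D*n) := by nlinarith [hsplit, hb1, hb2, hbig]
    have hc : n * n ≤ (2*D*S.card) * n := by calc n*n ≤ S.card * (2*D*n) := hnn2
      _ = (2*D*S.card)*n := by ring
    exact Nat.le_of_mul_le_mul_right hc hn0
  have hS : E ≤ S.card := by
    have h3 : (2*D)*E ≤ (2*D)*S.card := by
      calc (2*D)*E = 2*D*E := by ring
      _ ≤ 2*D*E*r := Nat.le_mul_of_pos_right _ hr
      _ = n := hn.symm
      _ ≤ 2*D*S.card := hB
      _ = (2*D)*S.card := by ring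
    exact Nat.le_of_mul_le_mul_left h3 (by omega)
  have hcol : ∀ u ∈ S, ∀ v ∈ W u, c (u, v) = k₀ := by
    intro u _ v hv
    rw [hWdef] at hv
    exact (Finset.mem_filter.mp hv).2
  have hw : ∀ u ∈ S, n ≤ 2*D*(W u).card := by
    intro u hu
    rw [hSdef, Finset.mem_filter] at hu
    exact hu.2
  exact endgame c hq hD hE (by rw [hn]; exact Nat.le_mul_of_pos_right _ hr) hmono k₀ S W hcol hw hS

lemma card_agree_bound {n q : ℕ} (s : Finset ((Fin q → Fin n) × (Fin q → Fin n)))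
    (I J : Finset (Fin q))
    (hagree : ∀ ab ∈ s, ∀ ab' ∈ s,
      (∀ x ∈ I, ab.1 x = ab'.1 x) ∧ (∀ x ∈ J, ab.2 x = ab'.2 x)) :
    s.card ≤ n^(q - I.card) * n^(q - J.card) := by
  classical
  have hmain : s.card ≤ Fintype.card (({x // x ∈ Iᶜ} → Fin n) × ({x // x ∈ Jᶜ} → Fin n)) := by
    rw [← Finset.card_univ]
    apply Finset.card_le_card_of_injOn
      (fun ab => ((fun x : {x // x ∈ Iᶜ} => ab.1 x.1), (fun x : {x // x ∈ Jᶜ} => ab.2 x.1)))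
      (fun ab _ => Finset.mem_univ _)
    intro ab hab ab' hab' h
    simp only [Prod.mk.injEq] at h
    have h1 := congrFun h.1
    have h2 := congrFun h.2
    apply Prod.ext
    · funext x
      by_cases hx : x ∈ I
      · exact (hagree ab hab ab' hab').1 x hx
      · exact h1 ⟨x, Finset.mem_compl.mpr hx⟩
    · funext x
      by_cases hx : x ∈ J
      · exact (hagree ab hab ab' hab').2 x hx
      · exact h2 ⟨x, Finset.mem_compl.mpr hx⟩
  calc s.card ≤ Fintype.card (({x // x ∈ Iᶜ} → Fin n) × ({x // x ∈ Jᶜ} → Fin n)) := hmain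
  _ = n^(q - I.card) * n^(q - J.card) := by
      simp [Fintype.card_prod, Fintype.card_fun, Fintype.card_coe, Finset.card_compl]

lemma main_lemma {q n r D E : ℕ} (hq : 2 ≤ q) (hr : 0 < r)
    (hD : D = 4^q*q^4) (hE : E = q*(8*D)^q + 2*q + 2) (hn : n = 2*D*E*r)
    (c : Fin n × Fin n → Fin r)
    (hm : ¬ HasMonoKst c q q)
    (hm' : ¬ HasMonoKst (fun e : Fin n × Fin n => c (e.2, e.1)) q q)
    (hrb : ¬ HasRainbowKst c q q) : False := by
  classical
  have hD1 : 1 ≤ D := by rw [hD]; exact Nat.one_le_iff_ne_zero.mpr (by positivity)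
  have hE2q : 2*q + 2 ≤ E := by
    have h0 : 0 ≤ q * (8*D)^q := Nat.zero_le _
    linarith [hE.ge, hE.le]
  have hn0 : 0 < n := by
    rw [hn]; exact Nat.mul_pos (Nat.mul_pos (by omega) (by omega)) hr
  have hn2q : 2*q ≤ n := by
    have h1 : 2*q ≤ 2*D*E := by nlinarith
    calc 2*q ≤ 2*D*E := h1
    _ ≤ 2*D*E*r := Nat.le_mul_of_pos_right _ hr
    _ = n := hn.symm
  set F := (univ : Finset ((Fin q → Fin n) × (Fin q → Fin n))).filter
      (fun ab => Function.Injective ab.1 ∧ Function.Injective ab.2) with hFdef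
  have hFcard : n.descFactorial q * n.descFactorial q ≤ F.card := by
    have hinj := Finset.card_le_card_of_injOn
      (f := fun (e : (Fin q ↪ Fin n) × (Fin q ↪ Fin n)) =>
        ((e.1 : Fin q → Fin n), (e.2 : Fin q → Fin n)))
      (s := univ) (t := F)
      (fun e _ => by
        rw [hFdef]
        simp only [Finset.mem_coe, Finset.mem_filter, Finset.mem_univ, true_and]
        exact ⟨e.1.injective, e.2.injective⟩)
      (fun e _ e' _ h => by
        simp only [Prod.mk.injEq] at h
        exact Prod.ext (DFunLike.coe_injective h.1) (DFunLike.coe_injective h.2))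
    rwa [Finset.card_univ, Fintype.card_prod, Fintype.card_embedding_eq, Fintype.card_fin,
      Fintype.card_fin] at hinj
  set Pat := (univ : Finset ((Fin q × Fin q) × (Fin q × Fin q))).filter (fun p => p.1 ≠ p.2)
    with hPatdef
  set Caught : ((Fin q × Fin q) × (Fin q × Fin q)) → Finset ((Fin q → Fin n) × (Fin q → Fin n)) :=
    fun p => F.filter (fun ab => c (ab.1 p.1.1, ab.2 p.1.2) = c (ab.1 p.2.1, ab.2 p.2.2))
    with hCdef
  have hrb' := hrb
  rw [HasRainbowKst] at hrb'
  push_neg at hrb'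
  have hcover : F ⊆ Pat.biUnion Caught := by
    intro ab hab
    have habF := hab
    rw [hFdef, Finset.mem_filter] at hab
    obtain ⟨-, ha, hb⟩ := hab
    have hAcard : (univ.image ab.1).card = q := by
      rw [Finset.card_image_of_injective _ ha, Finset.card_univ, Fintype.card_fin]
    have hBcard : (univ.image ab.2).card = q := by
      rw [Finset.card_image_of_injective _ hb, Finset.card_univ, Fintype.card_fin]
    obtain ⟨x, hx, y, hy, x', hx', y', hy', hne, hceq⟩ :=
      hrb' (univ.image ab.1) (univ.image ab.2) hAcard hBcard
    obtain ⟨i, -, rfl⟩ := Finset.mem_image.mp hx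
    obtain ⟨j, -, rfl⟩ := Finset.mem_image.mp hy
    obtain ⟨i', -, rfl⟩ := Finset.mem_image.mp hx'
    obtain ⟨j', -, rfl⟩ := Finset.mem_image.mp hy'
    refine Finset.mem_biUnion.mpr ⟨((i,j),(i',j')), ?_, ?_⟩
    · rw [hPatdef]
      simp only [Finset.mem_filter, Finset.mem_univ, true_and]
      intro hcontra
      have h1 : (i, j) = (i', j') := hcontra
      apply hne
      rw [Prod.mk.injEq] at h1
      rw [h1.1, h1.2]
    · rw [hCdef]
      exact Finset.mem_filter.mpr ⟨habF, hceq⟩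
  have hsum : F.card ≤ ∑ p ∈ Pat, (Caught p).card :=
    le_trans (Finset.card_le_card hcover) (Finset.card_biUnion_le)
  have hPatne : Pat.Nonempty := by
    refine ⟨((⟨0, by omega⟩, ⟨0, by omega⟩), (⟨0, by omega⟩, ⟨1, by omega⟩)), ?_⟩
    rw [hPatdef]
    simp only [Finset.mem_filter, Finset.mem_univ, true_and]
    simp only [ne_eq, Prod.mk.injEq, Fin.mk.injEq]
    omega
  obtain ⟨p₀, hp₀mem, hp₀max⟩ := Finset.exists_max_image Pat (fun p => (Caught p).card) hPatne
  have hPatcard : Pat.card ≤ q^4 := by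
    calc Pat.card ≤ (univ : Finset ((Fin q × Fin q) × (Fin q × Fin q))).card :=
          Finset.card_filter_le _ _
    _ = q^4 := by
        rw [Finset.card_univ]
        simp only [Fintype.card_prod, Fintype.card_fin]
        ring
  have hkey : n^(2*q) ≤ D * (Caught p₀).card := by
    have hstep : n^q ≤ 2^q * (n-q)^q := by
      calc n^q ≤ (2*(n-q))^q := Nat.pow_le_pow_left (by omega) q
      _ = 2^q * (n-q)^q := mul_pow 2 (n-q) q
    have hdesc : (n-q)^q ≤ n.descFactorial q := sub_pow_le_descFactorial n q
    have h22 : (2:ℕ)^q * 2^q = 4^q := by rw [← mul_pow]; norm_num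
    calc n^(2*q) = n^q * n^q := by rw [← pow_add]; congr 1; omega
    _ ≤ (2^q*(n-q)^q) * (2^q*(n-q)^q) := Nat.mul_le_mul hstep hstep
    _ = (2^q*2^q) * ((n-q)^q * (n-q)^q) := by ring
    _ = 4^q * ((n-q)^q * (n-q)^q) := by rw [h22]
    _ ≤ 4^q * (n.descFactorial q * n.descFactorial q) :=
        Nat.mul_le_mul_left _ (Nat.mul_le_mul hdesc hdesc)
    _ ≤ 4^q * F.card := Nat.mul_le_mul_left _ hFcard
    _ ≤ 4^q * ∑ p ∈ Pat, (Caught p).card := Nat.mul_le_mul_left _ hsum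
    _ ≤ 4^q * (Pat.card * (Caught p₀).card) := by
        apply Nat.mul_le_mul_left
        rw [← smul_eq_mul]
        exact Finset.sum_le_card_nsmul Pat _ _ (fun p hp => hp₀max p hp)
    _ ≤ 4^q * (q^4 * (Caught p₀).card) := by
        apply Nat.mul_le_mul_left
        exact Nat.mul_le_mul hPatcard (le_refl _)
    _ = D * (Caught p₀).card := by rw [hD]; ring
  obtain ⟨⟨i, j⟩, ⟨i', j'⟩⟩ := p₀
  have hpne : (i, j) ≠ (i', j') := by
    rw [hPatdef, Finset.mem_filter] at hp₀mem
    exact hp₀mem.2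
  have hCmem : ∀ ab ∈ Caught ((i,j),(i',j')),
      Function.Injective ab.1 ∧ Function.Injective ab.2 ∧
        c (ab.1 i, ab.2 j) = c (ab.1 i', ab.2 j') := by
    intro ab hab
    rw [hCdef, Finset.mem_filter, hFdef, Finset.mem_filter] at hab
    exact ⟨hab.1.2.1, hab.1.2.2, hab.2⟩
  have cancel_pow : ∀ X e1 e2 : ℕ, e1 + e2 = 2*q →
      (Caught ((i,j),(i',j'))).card ≤ n^e2 * X → n^e1 ≤ D * X := by
    intro X e1 e2 hee hbd
    have hcan : n^e1 * n^e2 ≤ (D * X) * n^e2 := by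
      calc n^e1 * n^e2 = n^(2*q) := by rw [← pow_add]; congr 1
      _ ≤ D * (Caught ((i,j),(i',j'))).card := hkey
      _ ≤ D * (n^e2 * X) := Nat.mul_le_mul_left _ hbd
      _ = (D * X) * n^e2 := by ring
    exact Nat.le_of_mul_le_mul_right hcan (Nat.pow_pos hn0)
  by_cases hii : i = i'
  · -- row case
    subst hii
    have hjj : j ≠ j' := fun h => hpne (by rw [h])
    set T := (univ : Finset (Fin n × Fin n × Fin n)).filter (fun z =>
        z.2.1 ≠ z.2.2 ∧ c (z.1, z.2.1) = c (z.1, z.2.2)) with hTdef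
    have hbound : (Caught ((i,j),(i,j'))).card ≤ (n^(q-1) * n^(q-2)) * T.card := by
      apply le_trans (Finset.card_le_mul_card_image
        (f := fun ab => (ab.1 i, ab.2 j, ab.2 j')) _ (n^(q-1) * n^(q-2)) ?_)
      · apply Nat.mul_le_mul_left
        apply Finset.card_le_card
        intro z hz
        obtain ⟨ab, hab, rfl⟩ := Finset.mem_image.mp hz
        obtain ⟨ha, hb, hc'⟩ := hCmem ab hab
        rw [hTdef]
        simp only [Finset.mem_filter, Finset.mem_univ, true_and]
        exact ⟨fun h => hjj (hb h), hc'⟩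
      · intro val hval
        have hag := card_agree_bound ((Caught ((i,j),(i,j'))).filter
            (fun ab => (ab.1 i, ab.2 j, ab.2 j') = val)) {i} (insert j {j'}) ?_
        · calc _ ≤ n^(q - ({i} : Finset (Fin q)).card) *
                n^(q - (insert j {j'} : Finset (Fin q)).card) := hag
          _ ≤ n^(q-1) * n^(q-2) := by
              have hc1 : ({i} : Finset (Fin q)).card = 1 := Finset.card_singleton i
              have hc2 : (insert j {j'} : Finset (Fin q)).card = 2 := by
                rw [Finset.card_insert_of_notMem (by simp [hjj]), Finset.card_singleton]
              rw [hc1, hc2]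
        · intro ab hab ab' hab'
          rw [Finset.mem_filter] at hab hab'
          have h1 := hab.2
          have h2 := hab'.2
          rw [Prod.mk.injEq] at h1 h2
          have h1' := h1.2; have h2' := h2.2
          rw [Prod.mk.injEq] at h1' h2'
          constructor
          · intro x hx
            rw [Finset.mem_singleton] at hx
            subst hx
            rw [h1.1, h2.1]
          · intro x hx
            simp only [Finset.mem_insert, Finset.mem_singleton] at hx
            rcases hx with rfl | rfl
            · rw [h1'.1, h2'.1]
            · rw [h1'.2, h2'.2]
    have hrow : n^3 ≤ D * T.card :=
      cancel_pow T.card 3 ((q-1)+(q-2)) (by omega) (by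
        rw [pow_add]; exact hbound)
    exact row_case c hq hr hD hE hn hm hrow
  · by_cases hjj : j = j'
    · -- column case: apply row_case to the transposed coloring
      subst hjj
      set c' : Fin n × Fin n → Fin r := fun e => c (e.2, e.1) with hc'def
      set T := (univ : Finset (Fin n × Fin n × Fin n)).filter (fun z =>
          z.2.1 ≠ z.2.2 ∧ c' (z.1, z.2.1) = c' (z.1, z.2.2)) with hTdef
      have hbound : (Caught ((i,j),(i',j))).card ≤ (n^(q-2) * n^(q-1)) * T.card := by
        apply le_trans (Finset.card_le_mul_card_image
          (f := fun ab => (ab.2 j, ab.1 i, ab.1 i')) _ (n^(q-2) * n^(q-1)) ?_)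
        · apply Nat.mul_le_mul_left
          apply Finset.card_le_card
          intro z hz
          obtain ⟨ab, hab, rfl⟩ := Finset.mem_image.mp hz
          obtain ⟨ha, hb, hc'eq⟩ := hCmem ab hab
          rw [hTdef]
          simp only [Finset.mem_filter, Finset.mem_univ, true_and]
          refine ⟨fun h => hii (ha h), ?_⟩
          rw [hc'def]
          exact hc'eq
        · intro val hval
          have hag := card_agree_bound ((Caught ((i,j),(i',j))).filter
              (fun ab => (ab.2 j, ab.1 i, ab.1 i') = val)) (insert i {i'}) {j} ?_
          · calc _ ≤ n^(q - (insert i {i'} : Finset (Fin q)).card) *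
                  n^(q - ({j} : Finset (Fin q)).card) := hag
            _ ≤ n^(q-2) * n^(q-1) := by
                have hc1 : ({j} : Finset (Fin q)).card = 1 := Finset.card_singleton j
                have hc2 : (insert i {i'} : Finset (Fin q)).card = 2 := by
                  rw [Finset.card_insert_of_notMem (by simp [hii]), Finset.card_singleton]
                rw [hc1, hc2]
          · intro ab hab ab' hab'
            rw [Finset.mem_filter] at hab hab'
            have h1 := hab.2
            have h2 := hab'.2
            rw [Prod.mk.injEq] at h1 h2
            have h1' := h1.2; have h2' := h2.2
            rw [Prod.mk.injEq] at h1' h2'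
            constructor
            · intro x hx
              simp only [Finset.mem_insert, Finset.mem_singleton] at hx
              rcases hx with rfl | rfl
              · rw [h1'.1, h2'.1]
              · rw [h1'.2, h2'.2]
            · intro x hx
              rw [Finset.mem_singleton] at hx
              subst hx
              rw [h1.1, h2.1]
      have hrow : n^3 ≤ D * T.card :=
        cancel_pow T.card 3 ((q-2)+(q-1)) (by omega) (by
          rw [pow_add]; exact hbound)
      exact row_case c' hq hr hD hE hn hm' hrow
    · -- general case
      set T := (univ : Finset ((Fin n × Fin n) × (Fin n × Fin n))).filter (fun z =>
          z.1.1 ≠ z.2.1 ∧ z.1.2 ≠ z.2.2 ∧ c z.1 = c z.2) with hTdef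
      have hbound : (Caught ((i,j),(i',j'))).card ≤ (n^(q-2) * n^(q-2)) * T.card := by
        apply le_trans (Finset.card_le_mul_card_image
          (f := fun ab => ((ab.1 i, ab.2 j), (ab.1 i', ab.2 j'))) _ (n^(q-2) * n^(q-2)) ?_)
        · apply Nat.mul_le_mul_left
          apply Finset.card_le_card
          intro z hz
          obtain ⟨ab, hab, rfl⟩ := Finset.mem_image.mp hz
          obtain ⟨ha, hb, hc'⟩ := hCmem ab hab
          rw [hTdef]
          simp only [Finset.mem_filter, Finset.mem_univ, true_and]
          exact ⟨fun h => hii (ha h), fun h => hjj (hb h), hc'⟩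
        · intro val hval
          have hag := card_agree_bound ((Caught ((i,j),(i',j'))).filter
              (fun ab => ((ab.1 i, ab.2 j), (ab.1 i', ab.2 j')) = val))
              (insert i {i'}) (insert j {j'}) ?_
          · calc _ ≤ n^(q - (insert i {i'} : Finset (Fin q)).card) *
                  n^(q - (insert j {j'} : Finset (Fin q)).card) := hag
            _ ≤ n^(q-2) * n^(q-2) := by
                have hc1 : (insert i {i'} : Finset (Fin q)).card = 2 := by
                  rw [Finset.card_insert_of_notMem (by simp [hii]), Finset.card_singleton]
                have hc2 : (insert j {j'} : Finset (Fin q)).card = 2 := by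
                  rw [Finset.card_insert_of_notMem (by simp [hjj]), Finset.card_singleton]
                rw [hc1, hc2]
          · intro ab hab ab' hab'
            rw [Finset.mem_filter] at hab hab'
            have h1 := hab.2
            have h2 := hab'.2
            rw [Prod.mk.injEq] at h1 h2
            have h11 := h1.1; have h12 := h1.2
            have h21 := h2.1; have h22 := h2.2
            rw [Prod.mk.injEq] at h11 h12 h21 h22
            constructor
            · intro x hx
              simp only [Finset.mem_insert, Finset.mem_singleton] at hx
              rcases hx with rfl | rfl
              · rw [h11.1, h21.1]
              · rw [h12.1, h22.1]
            · intro x hx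
              simp only [Finset.mem_insert, Finset.mem_singleton] at hx
              rcases hx with rfl | rfl
              · rw [h11.2, h21.2]
              · rw [h12.2, h22.2]
      have hgen : n^4 ≤ D * T.card :=
        cancel_pow T.card 4 ((q-2)+(q-2)) (by omega) (by
          rw [pow_add]; exact hbound)
      exact gen_case c hq hr hD hE hn hm hgen

lemma mono_shrink {n₁ n₂ r s t s' t' : ℕ} {c : Fin n₁ × Fin n₂ → Fin r}
    (hs : s' ≤ s) (ht : t' ≤ t) (h : HasMonoKst c s t) : HasMonoKst c s' t' := by
  obtain ⟨A, B, hA, hB, hP⟩ := h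
  obtain ⟨A', hA's, hA'⟩ := Finset.exists_subset_card_eq (hA ▸ hs)
  obtain ⟨B', hB's, hB'⟩ := Finset.exists_subset_card_eq (hB ▸ ht)
  exact ⟨A', B', hA', hB', fun a ha b hb a' ha' b' hb' =>
    hP a (hA's ha) b (hB's hb) a' (hA's ha') b' (hB's hb')⟩

lemma rainbow_shrink {n₁ n₂ r s t s' t' : ℕ} {c : Fin n₁ × Fin n₂ → Fin r}
    (hs : s' ≤ s) (ht : t' ≤ t) (h : HasRainbowKst c s t) : HasRainbowKst c s' t' := by
  obtain ⟨A, B, hA, hB, hP⟩ := h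
  obtain ⟨A', hA's, hA'⟩ := Finset.exists_subset_card_eq (hA ▸ hs)
  obtain ⟨B', hB's, hB'⟩ := Finset.exists_subset_card_eq (hB ▸ ht)
  exact ⟨A', B', hA', hB', fun a ha b hb a' ha' b' hb' =>
    hP a (hA's ha) b (hB's hb) a' (hA's ha') b' (hB's hb')⟩

lemma mono_swap {n₁ n₂ r s t : ℕ} {c : Fin n₁ × Fin n₂ → Fin r}
    (h : HasMonoKst (fun e : Fin n₂ × Fin n₁ => c (e.2, e.1)) s t) : HasMonoKst c t s := by
  obtain ⟨A, B, hA, hB, hP⟩ := h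
  exact ⟨B, A, hB, hA, fun b hb a ha b' hb' a' ha' => hP a ha b hb a' ha' b' hb'⟩

end BGRaux

/-- For any pair of positive integers `s, t`, there exists a constant `C` such that for every
positive integer `r`, with `n = C * r`, every `r`-coloring of `K_{n,n}` contains a monochromatic
or rainbow copy of `K_{s,t}` (in either orientation). -/
theorem bipartite_gallai_ramsey_linear (s t : ℕ) (hs : 0 < s) (ht : 0 < t) :
    ∃ C : ℕ, ∀ r : ℕ, 0 < r → ∀ c : Fin (C * r) × Fin (C * r) → Fin r,
      (HasMonoKst c s t ∨ HasMonoKst c t s) ∨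
      (HasRainbowKst c s t ∨ HasRainbowKst c t s) := by
  set q := max (max s t) 2 with hqdef
  have hq : 2 ≤ q := le_max_right _ _
  have hsq : s ≤ q := le_trans (le_max_left s t) (le_max_left _ _)
  have htq : t ≤ q := le_trans (le_max_right s t) (le_max_left _ _)
  set D := 4^q * q^4 with hD
  set E := q * (8*D)^q + 2*q + 2 with hE
  refine ⟨2*D*E, fun r hr c => ?_⟩
  by_contra h
  push_neg at h
  obtain ⟨⟨hm1, hm2⟩, hr1, hr2⟩ := h
  have hm : ¬ HasMonoKst c q q := fun hmono =>
    hm1 (BGRaux.mono_shrink hsq htq hmono)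
  have hm' : ¬ HasMonoKst (fun e : Fin (2*D*E*r) × Fin (2*D*E*r) => c (e.2, e.1)) q q :=
    fun hmono => hm2 (BGRaux.mono_shrink htq hsq (BGRaux.mono_swap hmono))
  have hrb : ¬ HasRainbowKst c q q := fun hrain =>
    hr1 (BGRaux.rainbow_shrink hsq htq hrain)
  exact BGRaux.main_lemma hq hr hD hE rfl c hm hm' hrb
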